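/- Let N ≥ 1 and let 0 < k < N. Then the sum, over all paths w : Fin N → Bool with w(0) = true and exactly k visits to S1, of the weight of w equals ∑_{j=1}^{min(k, N−k)} C(k−1, j−1)·p11^{k−j}·p10^{j}·C(N−k−1, j−1)·p01^{j−1}·p00^{N−k−j} + ∑_{j=1}^{min(k−1, N−k)} C(k−1, j)·p11^{k−j−1}·p10^{j}·C(N−k−1, j−1)·p01^{j}·p00^{N−k−j}. (This is the quantity P₁(k, N | S₁) of Theorem 1.) -/

import Mathlib

open Finset

/-- Transition probability of the two-state chain: `false` is S0, `true` is S1. -/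
def mcStep (p00 p01 p10 p11 : ℝ) : Bool → Bool → ℝ
  | false, false => p00
  | false, true  => p01
  | true,  false => p10
  | true,  true  => p11

/-- Weight of a path `w : Fin N → Bool`: product over `i = 0, …, N-2` of the
transition probability from `w i` to `w (i+1)`; equals `1` when `N = 1`. -/
def pathWeight (p00 p01 p10 p11 : ℝ) {N : ℕ} (w : Fin N → Bool) : ℝ :=
  ∏ i : Fin (N - 1),
    mcStep p00 p01 p10 p11
      (w ⟨i.val, by have := i.isLt; omega⟩)
      (w ⟨i.val + 1, by have := i.isLt; omega⟩)

/-- Number of visits to S1 (i.e. `true`) of a path. -/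
def visitsS1 {N : ℕ} (w : Fin N → Bool) : ℕ :=
  (Finset.univ.filter fun i : Fin N => w i = true).card

/-- Number of descents (indices `i ≤ N-2` with `w i = true` and `w (i+1) = false`). -/
def descents {N : ℕ} (w : Fin N → Bool) : ℕ :=
  (Finset.univ.filter fun i : Fin (N - 1) =>
    w ⟨i.val, by have := i.isLt; omega⟩ = true ∧
    w ⟨i.val + 1, by have := i.isLt; omega⟩ = false).card

/-- Number of ascents (indices `i ≤ N-2` with `w i = false` and `w (i+1) = true`). -/
def ascents {N : ℕ} (w : Fin N → Bool) : ℕ :=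
  (Finset.univ.filter fun i : Fin (N - 1) =>
    w ⟨i.val, by have := i.isLt; omega⟩ = false ∧
    w ⟨i.val + 1, by have := i.isLt; omega⟩ = true).card

section Aux

variable (p00 p01 p10 p11 : ℝ)

lemma pathWeight_succ' {M : ℕ} (w : Fin (M+1) → Bool) :
    pathWeight p00 p01 p10 p11 w
      = ∏ i : Fin M, mcStep p00 p01 p10 p11 (w i.castSucc) (w i.succ) := rfl

lemma weight_snoc {M : ℕ} (w : Fin (M+1) → Bool) (b : Bool) :
    pathWeight p00 p01 p10 p11 (Fin.snoc w b : Fin (M+2) → Bool)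
      = pathWeight p00 p01 p10 p11 w * mcStep p00 p01 p10 p11 (w (Fin.last M)) b := by
  rw [pathWeight_succ', pathWeight_succ', Fin.prod_univ_castSucc]
  simp [Fin.succ_castSucc, Fin.snoc_castSucc, Fin.succ_last, Fin.snoc_last, -Fin.castSucc_succ]

lemma visits_snoc {M : ℕ} (w : Fin (M+1) → Bool) (b : Bool) :
    visitsS1 (Fin.snoc w b : Fin (M+2) → Bool) = visitsS1 w + b.toNat := by
  unfold visitsS1
  rw [Finset.card_filter, Finset.card_filter, Fin.sum_univ_castSucc]
  simp [Fin.snoc_castSucc, Fin.snoc_last]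
  cases b <;> simp

lemma snoc_zero {M : ℕ} (w : Fin (M+1) → Bool) (b : Bool) :
    (Fin.snoc w b : Fin (M+2) → Bool) 0 = w 0 := by
  have : (0 : Fin (M+2)) = Fin.castSucc 0 := rfl
  rw [this, Fin.snoc_castSucc]

/-- Sum of weights of paths of length `M+1` starting at `true`, ending at `true`,
with `k` visits to S1. -/
noncomputable def SA (M k : ℕ) : ℝ :=
  ∑ w ∈ Finset.univ.filter (fun w : Fin (M+1) → Bool =>
      w 0 = true ∧ w (Fin.last M) = true ∧ visitsS1 w = k),
    pathWeight p00 p01 p10 p11 w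

/-- Sum of weights of paths of length `M+1` starting at `true`, ending at `false`,
with `k` visits to S1. -/
noncomputable def SB (M k : ℕ) : ℝ :=
  ∑ w ∈ Finset.univ.filter (fun w : Fin (M+1) → Bool =>
      w 0 = true ∧ w (Fin.last M) = false ∧ visitsS1 w = k),
    pathWeight p00 p01 p10 p11 w

lemma sum_snoc_split {M : ℕ} (g : (Fin (M+2) → Bool) → ℝ) :
    ∑ w : Fin (M+2) → Bool, g w
      = ∑ b : Bool, ∑ w : Fin (M+1) → Bool, g (Fin.snoc w b) := by
  rw [← Equiv.sum_comp (Fin.snocEquiv (fun _ => Bool)) g, Fintype.sum_prod_type]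
  rfl

lemma SA_succ (M k : ℕ) :
    SA p00 p01 p10 p11 (M+1) (k+1)
      = SA p00 p01 p10 p11 M k * p11 + SB p00 p01 p10 p11 M k * p01 := by
  unfold SA SB
  rw [Finset.sum_filter, Finset.sum_filter, Finset.sum_filter, sum_snoc_split,
    Fintype.sum_bool]
  have h2 : ∀ w : Fin (M+1) → Bool,
      (if (Fin.snoc w false : Fin (M+2) → Bool) 0 = true ∧
          (Fin.snoc w false : Fin (M+2) → Bool) (Fin.last (M+1)) = true ∧
          visitsS1 (Fin.snoc w false : Fin (M+2) → Bool) = k+1 then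
        pathWeight p00 p01 p10 p11 (Fin.snoc w false : Fin (M+2) → Bool) else 0) = 0 := by
    intro w
    simp [Fin.snoc_last]
  rw [Finset.sum_congr rfl (fun w _ => h2 w), Finset.sum_const_zero, add_zero]
  have h1 : ∀ w : Fin (M+1) → Bool,
      (if (Fin.snoc w true : Fin (M+2) → Bool) 0 = true ∧
          (Fin.snoc w true : Fin (M+2) → Bool) (Fin.last (M+1)) = true ∧
          visitsS1 (Fin.snoc w true : Fin (M+2) → Bool) = k+1 then
        pathWeight p00 p01 p10 p11 (Fin.snoc w true : Fin (M+2) → Bool) else 0)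
      = (if w 0 = true ∧ w (Fin.last M) = true ∧ visitsS1 w = k then
            pathWeight p00 p01 p10 p11 w else 0) * p11
        + (if w 0 = true ∧ w (Fin.last M) = false ∧ visitsS1 w = k then
            pathWeight p00 p01 p10 p11 w else 0) * p01 := by
    intro w
    rw [snoc_zero, visits_snoc, weight_snoc]
    simp only [Fin.snoc_last, Bool.toNat_true]
    cases hl : w (Fin.last M) <;> by_cases h0 : w 0 = true <;>
      by_cases hv : visitsS1 w = k <;> simp [hl, h0, hv, mcStep]
  rw [Finset.sum_congr rfl (fun w _ => h1 w), Finset.sum_add_distrib,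
    ← Finset.sum_mul, ← Finset.sum_mul]

lemma SB_succ (M k : ℕ) :
    SB p00 p01 p10 p11 (M+1) k
      = SA p00 p01 p10 p11 M k * p10 + SB p00 p01 p10 p11 M k * p00 := by
  unfold SA SB
  rw [Finset.sum_filter, Finset.sum_filter, Finset.sum_filter, sum_snoc_split,
    Fintype.sum_bool]
  have h2 : ∀ w : Fin (M+1) → Bool,
      (if (Fin.snoc w true : Fin (M+2) → Bool) 0 = true ∧
          (Fin.snoc w true : Fin (M+2) → Bool) (Fin.last (M+1)) = false ∧
          visitsS1 (Fin.snoc w true : Fin (M+2) → Bool) = k then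
        pathWeight p00 p01 p10 p11 (Fin.snoc w true : Fin (M+2) → Bool) else 0) = 0 := by
    intro w
    simp [Fin.snoc_last]
  rw [Finset.sum_congr rfl (fun w _ => h2 w), Finset.sum_const_zero, zero_add]
  have h1 : ∀ w : Fin (M+1) → Bool,
      (if (Fin.snoc w false : Fin (M+2) → Bool) 0 = true ∧
          (Fin.snoc w false : Fin (M+2) → Bool) (Fin.last (M+1)) = false ∧
          visitsS1 (Fin.snoc w false : Fin (M+2) → Bool) = k then
        pathWeight p00 p01 p10 p11 (Fin.snoc w false : Fin (M+2) → Bool) else 0)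
      = (if w 0 = true ∧ w (Fin.last M) = true ∧ visitsS1 w = k then
            pathWeight p00 p01 p10 p11 w else 0) * p10
        + (if w 0 = true ∧ w (Fin.last M) = false ∧ visitsS1 w = k then
            pathWeight p00 p01 p10 p11 w else 0) * p00 := by
    intro w
    rw [snoc_zero, visits_snoc, weight_snoc]
    simp only [Fin.snoc_last, Bool.toNat_false, add_zero]
    cases hl : w (Fin.last M) <;> by_cases h0 : w 0 = true <;>
      by_cases hv : visitsS1 w = k <;> simp [hl, h0, hv, mcStep]
  rw [Finset.sum_congr rfl (fun w _ => h1 w), Finset.sum_add_distrib,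
    ← Finset.sum_mul, ← Finset.sum_mul]

lemma visits_ne_zero {M : ℕ} (w : Fin (M+1) → Bool) (h : w 0 = true) :
    visitsS1 w ≠ 0 := by
  have : (0 : Fin (M+1)) ∈ Finset.univ.filter fun i : Fin (M+1) => w i = true := by
    simp [h]
  exact Finset.card_ne_zero_of_mem this

lemma SA_zero (M : ℕ) : SA p00 p01 p10 p11 M 0 = 0 := by
  unfold SA
  rw [Finset.filter_false_of_mem, Finset.sum_empty]
  rintro w - ⟨h0, -, hv⟩
  exact visits_ne_zero w h0 hv

lemma SB_zero (M : ℕ) : SB p00 p01 p10 p11 M 0 = 0 := by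
  unfold SB
  rw [Finset.filter_false_of_mem, Finset.sum_empty]
  rintro w - ⟨h0, -, hv⟩
  exact visits_ne_zero w h0 hv

lemma SA_base (k : ℕ) : SA p00 p01 p10 p11 0 (k+1) = if k = 0 then 1 else 0 := by
  unfold SA
  rw [Finset.sum_filter, ← Equiv.sum_comp (Equiv.funUnique (Fin 1) Bool).symm,
    Fintype.sum_bool]
  have hlast : (Fin.last 0) = (0 : Fin 1) := rfl
  have hv : ∀ b : Bool, visitsS1 (uniqueElim b : Fin 1 → Bool) = if b then 1 else 0 := by
    intro b; cases b <;> simp [visitsS1, uniqueElim]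
  have hw : ∀ b : Bool, pathWeight p00 p01 p10 p11 (uniqueElim b : Fin 1 → Bool) = 1 := by
    intro b
    unfold pathWeight
    have : IsEmpty (Fin (1-1)) := by rw [show (1:ℕ)-1 = 0 from rfl]; infer_instance
    exact Finset.prod_of_isEmpty _
  have hu : ∀ b : Bool, (uniqueElim b : Fin 1 → Bool) 0 = b := fun b => rfl
  simp only [Equiv.funUnique_symm_apply]
  by_cases hk : k = 0 <;> simp [hv, hw, hk, hlast, hu]

lemma SB_base (k : ℕ) : SB p00 p01 p10 p11 0 k = 0 := by
  unfold SB
  rw [Finset.filter_false_of_mem, Finset.sum_empty]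
  rintro w - ⟨h0, hl, -⟩
  rw [show (Fin.last 0) = (0 : Fin 1) from rfl] at hl
  rw [h0] at hl
  simp at hl

/-- Closed form for end-true path sums. -/
noncomputable def aS (N k : ℕ) : ℝ :=
  ∑ i ∈ Finset.range (N - k),
    (Nat.choose (k-1) (i+1) : ℝ) * p11^(k-2-i) * p10^(i+1) *
      (Nat.choose (N-k-1) i : ℝ) * p01^(i+1) * p00^(N-k-1-i)

/-- Closed form for end-false path sums. -/
noncomputable def bS (N k : ℕ) : ℝ :=
  ∑ i ∈ Finset.range (N - k),
    (Nat.choose (k-1) i : ℝ) * p11^(k-1-i) * p10^(i+1) *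
      (Nat.choose (N-k-1) i : ℝ) * p01^i * p00^(N-k-1-i)

lemma idA (N k : ℕ) :
    aS p00 p01 p10 p11 (N+1) (k+2)
      = aS p00 p01 p10 p11 N (k+1) * p11 + bS p00 p01 p10 p11 N (k+1) * p01 := by
  unfold aS bS
  rw [Finset.sum_mul, Finset.sum_mul, ← Finset.sum_add_distrib,
    show N + 1 - (k+2) = N - (k+1) from by omega]
  apply Finset.sum_congr rfl
  intro i hi
  simp only [show k+2-1 = k+1 from rfl, show k+1-1 = k from rfl,
    show k+2-2 = k from rfl, show k+1-2 = k-1 from rfl,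
    Nat.choose_succ_succ' k i]
  by_cases hik : i + 1 ≤ k
  · rw [show k - i = (k-1-i)+1 from by omega, pow_succ, pow_succ p01 i]
    push_cast
    ring
  · rw [Nat.choose_eq_zero_of_lt (show k < i+1 by omega)]
    rw [pow_succ p01 i]
    push_cast
    ring

lemma idB (N k : ℕ) (hk : 1 ≤ k) :
    bS p00 p01 p10 p11 (N+1) k
      = (if k = N then p11^(N-1) * p10 else 0)
        + aS p00 p01 p10 p11 N k * p10 + bS p00 p01 p10 p11 N k * p00 := by
  clear hk
  rcases lt_trichotomy k N with hlt | rfl | hgt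
  · -- main case k < N
    rw [if_neg (by omega), zero_add]
    obtain ⟨m, hmeq⟩ : ∃ m', N - k = m' + 1 := ⟨N - k - 1, by omega⟩
    unfold aS bS
    rw [show N + 1 - k = m + 2 from by omega, hmeq]
    simp only [Nat.add_sub_cancel, show m + 2 - 1 = m + 1 from rfl]
    set f : ℕ → ℝ := fun i =>
      (Nat.choose (k-1) i : ℝ) * p11^(k-1-i) * p10^(i+1) *
        (Nat.choose (m+1) i : ℝ) * p01^i * p00^(m+1-i) with hf
    set bt : ℕ → ℝ := fun i =>
      (Nat.choose (k-1) i : ℝ) * p11^(k-1-i) * p10^(i+1) *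
        (Nat.choose m i : ℝ) * p01^i * p00^(m-i) with hbt
    set at' : ℕ → ℝ := fun i =>
      (Nat.choose (k-1) (i+1) : ℝ) * p11^(k-2-i) * p10^(i+1) *
        (Nat.choose m i : ℝ) * p01^(i+1) * p00^(m-i) with hat
    show ∑ i ∈ range (m+2), f i
      = (∑ i ∈ range (m+1), at' i) * p10 + (∑ i ∈ range (m+1), bt i) * p00
    rw [show m + 2 = (m+1)+1 from rfl, Finset.sum_range_succ']
    have step1 : ∀ i ∈ range (m+1), f (i+1) = at' i * p10 + bt (i+1) * p00 := by
      intro i hi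
      simp only [hf, hbt, hat]
      rw [Nat.choose_succ_succ' m i,
        show m+1-(i+1) = m-i from by omega, show k-1-(i+1) = k-2-i from by omega]
      by_cases him : i < m
      · rw [show m - i = (m-(i+1))+1 from by omega, pow_succ]
        push_cast
        ring
      · have hieq : i = m := by
          have := Nat.lt_succ_iff.mp (Finset.mem_range.mp hi)
          omega
        subst hieq
        rw [Nat.choose_eq_zero_of_lt (Nat.lt_succ_self i)]
        push_cast
        ring
    rw [Finset.sum_congr rfl step1, Finset.sum_add_distrib, ← Finset.sum_mul,
      Finset.sum_mul (range (m+1)) bt p00,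
      Finset.sum_range_succ' (fun i => bt i * p00) m,
      Finset.sum_range_succ (fun i => bt (i+1) * p00) m]
    have hbm1 : bt (m+1) = 0 := by
      simp [hbt, Nat.choose_eq_zero_of_lt (Nat.lt_succ_self m)]
    have hf0 : f 0 = bt 0 * p00 := by
      simp only [hf, hbt]
      rw [show m + 1 - 0 = (m-0)+1 from by omega, pow_succ]
      simp
      ring
    rw [hbm1, hf0]
    ring
  · -- k = N
    rw [if_pos rfl]
    unfold aS bS
    simp only [Nat.sub_self, Finset.range_zero, Finset.sum_empty, mul_zero, zero_mul, add_zero]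
    rw [show k + 1 - k = 1 from by omega, Finset.sum_range_one]
    simp
  · -- k > N
    rw [if_neg (by omega)]
    unfold aS bS
    rw [show N + 1 - k = 0 from by omega, show N - k = 0 from by omega]
    simp

lemma aS_one (k : ℕ) : aS p00 p01 p10 p11 (k+1) 1 = 0 := by
  unfold aS
  apply Finset.sum_eq_zero
  intro i hi
  simp [show (1:ℕ)-1 = 0 from rfl, Nat.choose_eq_zero_of_lt (Nat.succ_pos i)]

lemma CF (M : ℕ) : ∀ k : ℕ,
    SA p00 p01 p10 p11 M (k+1)
        = (if k = M then p11^M else 0) + aS p00 p01 p10 p11 (M+1) (k+1)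
      ∧ SB p00 p01 p10 p11 M (k+1) = bS p00 p01 p10 p11 (M+1) (k+1) := by
  induction M with
  | zero =>
    intro k
    constructor
    · rw [SA_base]
      have ha : aS p00 p01 p10 p11 1 (k+1) = 0 := by
        unfold aS
        rw [show 1 - (k+1) = 0 from by omega]
        simp
      rw [ha, add_zero]
      by_cases hk : k = 0 <;> simp [hk]
    · rw [SB_base]
      unfold bS
      rw [show 1 - (k+1) = 0 from by omega]
      simp
  | succ M ih =>
    intro k
    constructor
    · cases k with
      | zero =>
        rw [show (0:ℕ)+1 = 0+1 from rfl, SA_succ, SA_zero, SB_zero,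
          if_neg (by omega), zero_mul, zero_mul, add_zero, zero_add]
        exact (aS_one p00 p01 p10 p11 (M+1)).symm
      | succ k =>
        rw [SA_succ, (ih k).1, (ih k).2, idA]
        by_cases hkM : k = M
        · rw [if_pos hkM, if_pos (by omega), hkM, pow_succ]
          ring
        · rw [if_neg hkM, if_neg (by omega)]
          ring
    · rw [SB_succ, (ih k).1, (ih k).2,
        idB p00 p01 p10 p11 (M+1) (k+1) (by omega)]
      by_cases hkM : k = M
      · rw [if_pos (by omega), if_pos (by omega), hkM]
        simp only [Nat.add_sub_cancel]
        ring
      · rw [if_neg (by omega), if_neg (by omega)]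
        ring

end Aux

theorem stmt0 (p00 p01 p10 p11 : ℝ) (N k : ℕ) (hN : 1 ≤ N) (hk0 : 0 < k) (hkN : k < N) :
    ∑ w ∈ Finset.univ.filter (fun w : Fin N → Bool =>
        w ⟨0, by omega⟩ = true ∧ visitsS1 w = k),
      pathWeight p00 p01 p10 p11 w =
    (∑ j ∈ Finset.Icc 1 (min k (N - k)),
        (Nat.choose (k - 1) (j - 1) : ℝ) * p11 ^ (k - j) * p10 ^ j *
          (Nat.choose (N - k - 1) (j - 1) : ℝ) * p01 ^ (j - 1) * p00 ^ (N - k - j)) +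
    (∑ j ∈ Finset.Icc 1 (min (k - 1) (N - k)),
        (Nat.choose (k - 1) j : ℝ) * p11 ^ (k - j - 1) * p10 ^ j *
          (Nat.choose (N - k - 1) (j - 1) : ℝ) * p01 ^ j * p00 ^ (N - k - j)) := by
  obtain ⟨M, rfl⟩ : ∃ M, N = M + 1 := ⟨N - 1, by omega⟩
  -- split the left-hand side by the last value
  have hsplit :
      (Finset.univ.filter (fun w : Fin (M+1) → Bool =>
          w ⟨0, by omega⟩ = true ∧ visitsS1 w = k))
        = (Finset.univ.filter (fun w : Fin (M+1) → Bool =>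
            w 0 = true ∧ w (Fin.last M) = true ∧ visitsS1 w = k))
          ∪ (Finset.univ.filter (fun w : Fin (M+1) → Bool =>
            w 0 = true ∧ w (Fin.last M) = false ∧ visitsS1 w = k)) := by
    ext w
    simp only [Finset.mem_filter, Finset.mem_union, Finset.mem_univ, true_and]
    simp only [Fin.mk_zero]
    cases hl : w (Fin.last M) <;> tauto
  have hdisj : Disjoint
      (Finset.univ.filter (fun w : Fin (M+1) → Bool =>
        w 0 = true ∧ w (Fin.last M) = true ∧ visitsS1 w = k))
      (Finset.univ.filter (fun w : Fin (M+1) → Bool =>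
        w 0 = true ∧ w (Fin.last M) = false ∧ visitsS1 w = k)) := by
    rw [Finset.disjoint_left]
    intro w h1 h2
    simp only [Finset.mem_filter] at h1 h2
    rw [h1.2.2.1] at h2
    simp at h2
  rw [hsplit, Finset.sum_union hdisj]
  obtain ⟨k', rfl⟩ : ∃ k', k = k' + 1 := ⟨k - 1, by omega⟩
  have hSA : SA p00 p01 p10 p11 M (k'+1) = aS p00 p01 p10 p11 (M+1) (k'+1) := by
    rw [(CF p00 p01 p10 p11 M k').1, if_neg (by omega), zero_add]
  have hSB : SB p00 p01 p10 p11 M (k'+1) = bS p00 p01 p10 p11 (M+1) (k'+1) :=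
    (CF p00 p01 p10 p11 M k').2
  show SA p00 p01 p10 p11 M (k'+1) + SB p00 p01 p10 p11 M (k'+1) = _
  rw [hSA, hSB]
  set N := M + 1 with hN'
  set k := k' + 1 with hk'
  -- first (end-false) sum equals bS, second (end-true) sum equals aS
  have hb : (∑ j ∈ Finset.Icc 1 (min k (N - k)),
        (Nat.choose (k - 1) (j - 1) : ℝ) * p11 ^ (k - j) * p10 ^ j *
          (Nat.choose (N - k - 1) (j - 1) : ℝ) * p01 ^ (j - 1) * p00 ^ (N - k - j))
      = bS p00 p01 p10 p11 N k := by
    rw [← Finset.Ico_add_one_right_eq_Icc, Finset.sum_Ico_eq_sum_range,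
      show min k (N - k) + 1 - 1 = min k (N - k) from by omega]
    unfold bS
    rw [← Finset.sum_subset
      (Finset.range_subset_range.mpr (min_le_right k (N - k)))
      (by
        intro i hi hni
        simp only [Finset.mem_range] at hi hni
        have hik : k ≤ i := by omega
        rw [Nat.choose_eq_zero_of_lt (show k - 1 < i by omega)]
        push_cast
        ring)]
    apply Finset.sum_congr rfl
    intro i hi
    rw [show 1 + i - 1 = i from by omega, show k - (1+i) = k-1-i from by omega,
      show N - k - (1+i) = N-k-1-i from by omega, show 1 + i = i + 1 from by omega]
  have ha : (∑ j ∈ Finset.Icc 1 (min (k - 1) (N - k)),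
        (Nat.choose (k - 1) j : ℝ) * p11 ^ (k - j - 1) * p10 ^ j *
          (Nat.choose (N - k - 1) (j - 1) : ℝ) * p01 ^ j * p00 ^ (N - k - j))
      = aS p00 p01 p10 p11 N k := by
    rw [← Finset.Ico_add_one_right_eq_Icc, Finset.sum_Ico_eq_sum_range,
      show min (k - 1) (N - k) + 1 - 1 = min (k - 1) (N - k) from by omega]
    unfold aS
    rw [← Finset.sum_subset
      (Finset.range_subset_range.mpr (min_le_right (k-1) (N - k)))
      (by
        intro i hi hni
        simp only [Finset.mem_range] at hi hni
        have hik : k - 1 ≤ i := by omega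
        rw [Nat.choose_eq_zero_of_lt (show k - 1 < i + 1 by omega)]
        push_cast
        ring)]
    apply Finset.sum_congr rfl
    intro i hi
    rw [show 1 + i - 1 = i from by omega, show k - (1+i) - 1 = k-2-i from by omega,
      show N - k - (1+i) = N-k-1-i from by omega, show 1 + i = i + 1 from by omega]
  rw [hb, ha]
  ring
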